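/- For a sorted positive diagonal matrix Λ = diag(λ₁,…,λₙ) and basis elements S^{p,q} (the symmetric matrix with 1's in positions (p,q) and (q,p)) with p ≠ q = r and p ≠ t, the Wasserstein sectional curvature of the plane spanned by S^{p,q} and S^{r,t} equals 3(1+δ_{rt})·λ_p·λ_t / [(λ_p+λ_r)(λ_r+λ_t)(λ_p+λ_t)]; in particular every such sectional curvature is nonnegative and strictly less than 3/(λ_p+λ_t) ≤ 3/λ_min(Λ). -/

import Mathlib

open Matrix

/-- Entrywise Sylvester solution at a positive diagonal matrix `Λ = diag lam`:
`(Γ_Λ[X]) i j = X i j / (lam i + lam j)`. -/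
noncomputable def gammaDiag {n : ℕ} (lam : Fin n → ℝ) (X : Matrix (Fin n) (Fin n) ℝ) :
    Matrix (Fin n) (Fin n) ℝ :=
  Matrix.of fun i j => X i j / (lam i + lam j)

/-- The symmetric basis matrix `S^{p,q}` with `1`s in positions `(p,q)` and `(q,p)`. -/
def symBasis {n : ℕ} (p q : Fin n) : Matrix (Fin n) (Fin n) ℝ :=
  Matrix.of fun i j =>
    (if i = p ∧ j = q then (1 : ℝ) else 0) + (if i = q ∧ j = p then (1 : ℝ) else 0)

/-- The Wasserstein sectional curvature at `Λ = diag lam` of the plane spanned by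
symmetric `X`, `Y`: `K = R(X,Y,X,Y)/(⟨X,X⟩⟨Y,Y⟩ − ⟨X,Y⟩²)` with
`R(X,Y,X,Y) = 3·tr(Γ_Λ[X]·Λ·Γ_Λ[Γ_Λ[X]Γ_Λ[Y] − Γ_Λ[Y]Γ_Λ[X]]·Λ·Γ_Λ[Y])` and
`⟨X,Y⟩ = (1/2)tr(Γ_Λ[X]·Y)`. -/
noncomputable def sectCurv {n : ℕ} (lam : Fin n → ℝ)
    (X Y : Matrix (Fin n) (Fin n) ℝ) : ℝ :=
  (3 * (gammaDiag lam X * Matrix.diagonal lam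
      * gammaDiag lam (gammaDiag lam X * gammaDiag lam Y
          - gammaDiag lam Y * gammaDiag lam X)
      * Matrix.diagonal lam * gammaDiag lam Y).trace)
  / ((1/2) * (gammaDiag lam X * X).trace * ((1/2) * (gammaDiag lam Y * Y).trace)
      - ((1/2) * (gammaDiag lam X * Y).trace) ^ 2)

/-- Wasserstein sectional curvatures at a positive diagonal matrix in the basis
directions: for `p ≠ q = r`, `p ≠ t`,
`K(S^{p,q}, S^{r,t}) = 3(1+δ_{rt})·λ_p·λ_t / [(λ_p+λ_r)(λ_r+λ_t)(λ_p+λ_t)]`;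
in particular it is nonnegative and `< 3/(λ_p+λ_t) ≤ 3/λ_min`. -/
theorem gamma_std {n : ℕ} (lam : Fin n → ℝ) (i j : Fin n) (c : ℝ) :
    gammaDiag lam (Matrix.single i j c) = Matrix.single i j (c / (lam i + lam j)) := by
  ext a b
  simp only [gammaDiag, Matrix.of_apply, Matrix.single]
  split_ifs with h
  · obtain ⟨rfl, rfl⟩ := h; rfl
  · simp

theorem gamma_add {n : ℕ} (lam : Fin n → ℝ) (A B : Matrix (Fin n) (Fin n) ℝ) :
    gammaDiag lam (A + B) = gammaDiag lam A + gammaDiag lam B := by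
  ext a b; simp [gammaDiag, add_div]

theorem gamma_sub {n : ℕ} (lam : Fin n → ℝ) (A B : Matrix (Fin n) (Fin n) ℝ) :
    gammaDiag lam (A - B) = gammaDiag lam A - gammaDiag lam B := by
  ext a b; simp [gammaDiag, sub_div]

theorem symBasis_eq {n : ℕ} (p q : Fin n) :
    symBasis p q = Matrix.single p q 1 + Matrix.single q p 1 := by
  ext a b
  simp only [symBasis, Matrix.single, Matrix.of_apply, Matrix.add_apply]
  congr 1 <;> [skip; skip] <;> apply if_congr (by tauto) rfl rfl

theorem std_mul_diag {n : ℕ} (d : Fin n → ℝ) (i j : Fin n) (c : ℝ) :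
    Matrix.single i j c * Matrix.diagonal d = Matrix.single i j (c * d j) := by
  ext a b
  rw [Matrix.mul_diagonal]
  simp only [Matrix.single, Matrix.of_apply]
  split_ifs with h
  · obtain ⟨rfl, rfl⟩ := h; rfl
  · simp

theorem diag_mul_std {n : ℕ} (d : Fin n → ℝ) (i j : Fin n) (c : ℝ) :
    Matrix.diagonal d * Matrix.single i j c = Matrix.single i j (d i * c) := by
  ext a b
  rw [Matrix.diagonal_mul]
  simp only [Matrix.single, Matrix.of_apply]
  split_ifs with h
  · obtain ⟨rfl, rfl⟩ := h; rfl
  · simp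

theorem sectional_curvature_basis {n : ℕ} (lam : Fin n → ℝ) (hlam : ∀ i, 0 < lam i)
    (p q t : Fin n) (hpq : p ≠ q) (hpt : p ≠ t) :
    sectCurv lam (symBasis p q) (symBasis q t)
        = 3 * (1 + (if q = t then (1 : ℝ) else 0)) * lam p * lam t
          / ((lam p + lam q) * (lam q + lam t) * (lam p + lam t)) ∧
    0 ≤ sectCurv lam (symBasis p q) (symBasis q t) ∧
    sectCurv lam (symBasis p q) (symBasis q t) < 3 / (lam p + lam t) ∧
    (∀ lmin : ℝ, 0 < lmin → (∀ i, lmin ≤ lam i) →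
      3 / (lam p + lam t) ≤ 3 / lmin) := by
  have hp := hlam p; have hq := hlam q; have ht := hlam t
  have hpq0 : (0:ℝ) < lam p + lam q := by linarith
  have hqt0 : (0:ℝ) < lam q + lam t := by linarith
  have hpt0 : (0:ℝ) < lam p + lam t := by linarith
  have hqp0 : (0:ℝ) < lam q + lam p := by linarith
  have htq0 : (0:ℝ) < lam t + lam q := by linarith
  have htp0 : (0:ℝ) < lam t + lam p := by linarith
  have hval : sectCurv lam (symBasis p q) (symBasis q t)
      = 3 * (1 + (if q = t then (1 : ℝ) else 0)) * lam p * lam t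
        / ((lam p + lam q) * (lam q + lam t) * (lam p + lam t)) := by
    rw [sectCurv, symBasis_eq p q, symBasis_eq q t, gamma_add, gamma_add,
      gamma_std, gamma_std, gamma_std, gamma_std]
    rcases eq_or_ne q t with rfl | hqt
    · rw [if_pos rfl]
      simp only [Matrix.add_mul, Matrix.mul_add, Matrix.sub_mul, Matrix.mul_sub,
        Matrix.single_mul_single_same, Matrix.single_mul_single_of_ne, hpq, hpq.symm,
        ne_eq, not_false_eq_true, gamma_sub, gamma_add, gamma_std,
        std_mul_diag, diag_mul_std, Matrix.trace_add, Matrix.trace_sub,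
        Matrix.trace_single_eq_of_ne, Matrix.trace_single_eq_same,
        Matrix.zero_mul, Matrix.mul_zero, Matrix.trace_zero, add_zero, zero_add, sub_zero]
      field_simp
      ring
    · rw [if_neg hqt]
      simp only [Matrix.add_mul, Matrix.mul_add, Matrix.sub_mul, Matrix.mul_sub,
        Matrix.single_mul_single_same, Matrix.single_mul_single_of_ne, hpq, hpq.symm,
        hpt, hpt.symm, hqt, hqt.symm, ne_eq, not_false_eq_true,
        gamma_sub, gamma_add, gamma_std,
        std_mul_diag, diag_mul_std, Matrix.trace_add, Matrix.trace_sub,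
        Matrix.trace_single_eq_of_ne, Matrix.trace_single_eq_same,
        Matrix.zero_mul, Matrix.mul_zero, Matrix.trace_zero, add_zero, zero_add, sub_zero]
      field_simp
      ring
  refine ⟨hval, ?_, ?_, ?_⟩
  · rw [hval]
    apply div_nonneg _ (by positivity)
    split_ifs <;> positivity
  · rw [hval, div_lt_div_iff₀ (by positivity) hpt0]
    split_ifs with h
    · subst h
      nlinarith [mul_pos hq hq, mul_pos hp hq, mul_pos (mul_pos hp hq) hq]
    · nlinarith [mul_pos (mul_pos hp hq) ht, mul_pos (mul_pos hq hq) ht,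
        mul_pos (mul_pos hp hq) hq, mul_pos (mul_pos hq hq) hq,
        mul_pos (mul_pos hp ht) ht, mul_pos (mul_pos hq ht) ht]
  · intro lmin hl hle
    gcongr
    have := hle p; linarith
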